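/- Let w : {0,1}^n → ℝ and fix t > 0. Define φ^w_k = ∑_{|x|=k} w(x)φ(x) for k ∈ [n], φ^w_0 = 0. Then Pr(φ(χ(t))=1) = ∑_{k=1}^n (φ^w_{n−k+1} − φ^w_{n−k}) · Pr(X_{k:n} > t) holds for every nondecreasing φ : {0,1}^n → {0,1} with φ(0)=0, φ(1)=1, if and only if Pr(χ(t) = x) = w(x) · ∑_{|z|=|x|} Pr(χ(t) = z) for every x ≠ (0,...,0). -/

import Mathlib

open MeasureTheory
open scoped ProbabilityTheory

private lemma lemA_aux (n : ℕ) {Ω : Type*} [MeasureSpace Ω] [IsProbabilityMeasure (ℙ : Measure Ω)]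
    (X : Fin n → Ω → ℝ) (hX : ∀ i, Measurable (X i)) (t : ℝ)
    (pred : (Fin n → Bool) → Prop) [DecidablePred pred] :
    (ℙ {ω | pred (fun i => decide (t < X i ω))}).toReal =
      ∑ x ∈ Finset.univ.filter pred,
        (ℙ {ω | (fun i => decide (t < X i ω)) = x}).toReal := by
  have hmeas : ∀ x : Fin n → Bool, MeasurableSet {ω | (fun i => decide (t < X i ω)) = x} := by
    intro x
    have : {ω | (fun i => decide (t < X i ω)) = x} =
        ⋂ i, X i ⁻¹' {r | decide (t < r) = x i} := by
      ext ω; simp [funext_iff, Set.mem_iInter]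
    rw [this]
    refine MeasurableSet.iInter fun i => (hX i) ?_
    have : {r : ℝ | decide (t < r) = x i} = if x i then Set.Ioi t else Set.Iic t := by
      cases h : x i <;> ext r <;> simp [decide_eq_true_eq, not_lt]
    rw [this]
    split <;> [exact measurableSet_Ioi; exact measurableSet_Iic]
  have hunion : {ω | pred (fun i => decide (t < X i ω))} =
      ⋃ x ∈ Finset.univ.filter pred, {ω | (fun i => decide (t < X i ω)) = x} := by
    ext ω
    simp only [Set.mem_setOf_eq, Set.mem_iUnion, Finset.mem_filter, Finset.mem_univ, true_and]
    constructor
    · intro h; exact ⟨fun i => decide (t < X i ω), h, rfl⟩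
    · rintro ⟨x, hx, h⟩; rw [h]; exact hx
  rw [hunion, measure_biUnion_finset ?_ (fun x _ => hmeas x)]
  · rw [ENNReal.toReal_sum (fun x _ => measure_ne_top _ _)]
  · intro x _ y _ hxy
    refine Set.disjoint_left.mpr fun ω hx hy => hxy ?_
    rw [← hx, ← hy]

private lemma tele_aux (n : ℕ) (A : ℕ → ℝ) : ∀ j, j ≤ n →
    ∑ k ∈ (Finset.Icc 1 n).filter (fun k => n + 1 - k ≤ j), (A (n - k + 1) - A (n - k))
      = A j - A 0 := by
  intro j
  induction j with
  | zero =>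
    intro _
    rw [Finset.filter_false_of_mem, Finset.sum_empty, sub_self]
    intro k hk; simp only [Finset.mem_Icc] at hk; omega
  | succ j ih =>
    intro hj
    have hset : (Finset.Icc 1 n).filter (fun k => n + 1 - k ≤ j + 1) =
        insert (n - j) ((Finset.Icc 1 n).filter (fun k => n + 1 - k ≤ j)) := by
      ext k
      simp only [Finset.mem_filter, Finset.mem_Icc, Finset.mem_insert]
      omega
    rw [hset, Finset.sum_insert (by simp only [Finset.mem_filter, Finset.mem_Icc]; omega),
      ih (by omega)]
    have h1 : n - (n - j) + 1 = j + 1 := by omega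
    have h2 : n - (n - j) = j := by omega
    rw [h1, h2]; ring

private lemma subB_aux (n : ℕ) (p w : (Fin n → Bool) → ℝ) (φ : (Fin n → Bool) → Bool)
    (hφ0 : φ (fun _ => false) = false) :
    ∑ k ∈ Finset.Icc 1 n,
      ((∑ x ∈ Finset.univ.filter
          (fun x : Fin n → Bool => (Finset.univ.filter fun i => x i = true).card = n - k + 1),
          w x * (if φ x then (1 : ℝ) else 0)) -
       (∑ x ∈ Finset.univ.filter
          (fun x : Fin n → Bool => (Finset.univ.filter fun i => x i = true).card = n - k),
          w x * (if φ x then (1 : ℝ) else 0))) *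
      (∑ x ∈ Finset.univ.filter
          (fun x : Fin n → Bool => n + 1 - k ≤ (Finset.univ.filter fun i => x i = true).card),
        p x)
    = ∑ z ∈ Finset.univ.filter (fun z : Fin n → Bool => φ z = true),
        w z * ∑ x ∈ Finset.univ.filter
            (fun x : Fin n → Bool => (Finset.univ.filter fun i => x i = true).card =
              (Finset.univ.filter fun i => z i = true).card),
          p x := by
  classical
  set c : (Fin n → Bool) → ℕ := fun x => (Finset.univ.filter fun i => x i = true).card with hc
  set A : ℕ → ℝ := fun j => ∑ x ∈ Finset.univ.filter (fun x => c x = j),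
    w x * (if φ x then (1 : ℝ) else 0) with hA
  have hcle : ∀ x : Fin n → Bool, c x ≤ n := by
    intro x
    calc c x ≤ Finset.univ.card := Finset.card_filter_le _ _
    _ = n := by simp
  have hA0 : A 0 = 0 := by
    apply Finset.sum_eq_zero
    intro x hx
    simp only [Finset.mem_filter, Finset.mem_univ, true_and] at hx
    have hx0 : x = fun _ => false := by
      funext i
      by_contra h
      rw [Bool.not_eq_false] at h
      have hmem : i ∈ Finset.univ.filter fun j => x j = true := by
        simp only [Finset.mem_filter, Finset.mem_univ, true_and]; exact h
      have hpos : 0 < c x := Finset.card_pos.mpr ⟨i, hmem⟩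
      omega
    rw [hx0, hφ0]; simp
  calc ∑ k ∈ Finset.Icc 1 n, (A (n - k + 1) - A (n - k)) *
          (∑ x ∈ Finset.univ.filter (fun x => n + 1 - k ≤ c x), p x)
      = ∑ k ∈ Finset.Icc 1 n, ∑ x ∈ Finset.univ,
          (if n + 1 - k ≤ c x then (A (n - k + 1) - A (n - k)) * p x else 0) := by
        refine Finset.sum_congr rfl fun k _ => ?_
        rw [Finset.mul_sum, Finset.sum_filter]
    _ = ∑ x ∈ Finset.univ, ∑ k ∈ Finset.Icc 1 n,
          (if n + 1 - k ≤ c x then (A (n - k + 1) - A (n - k)) * p x else 0) :=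
        Finset.sum_comm
    _ = ∑ x ∈ Finset.univ, A (c x) * p x := by
        refine Finset.sum_congr rfl fun x _ => ?_
        rw [← Finset.sum_filter, ← Finset.sum_mul, tele_aux n A (c x) (hcle x), hA0, sub_zero]
    _ = ∑ x ∈ Finset.univ, ∑ z ∈ Finset.univ,
          (if c z = c x then (w z * (if φ z then (1:ℝ) else 0)) * p x else 0) := by
        refine Finset.sum_congr rfl fun x _ => ?_
        rw [← Finset.sum_filter, ← Finset.sum_mul]
    _ = ∑ z ∈ Finset.univ, ∑ x ∈ Finset.univ,
          (if c z = c x then (w z * (if φ z then (1:ℝ) else 0)) * p x else 0) :=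
        Finset.sum_comm
    _ = ∑ z ∈ Finset.univ, (w z * (if φ z then (1:ℝ) else 0)) *
          ∑ x ∈ Finset.univ.filter (fun x => c x = c z), p x := by
        refine Finset.sum_congr rfl fun z _ => ?_
        rw [Finset.mul_sum, Finset.sum_filter]
        refine Finset.sum_congr rfl fun x _ => ?_
        by_cases hzx : c z = c x
        · rw [if_pos hzx, if_pos hzx.symm]
        · rw [if_neg hzx, if_neg (fun hh => hzx hh.symm)]
    _ = ∑ z ∈ Finset.univ.filter (fun z => φ z = true),
          w z * ∑ x ∈ Finset.univ.filter (fun x => c x = c z), p x := by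
        rw [Finset.sum_filter]
        refine Finset.sum_congr rfl fun z _ => ?_
        by_cases h : φ z = true
        · rw [if_pos h, if_pos h, mul_one]
        · rw [if_neg h, if_neg h, mul_zero, zero_mul]

private lemma core_aux (n : ℕ) (d : (Fin n → Bool) → ℝ)
    (H : ∀ φ : (Fin n → Bool) → Bool,
      (∀ x y : Fin n → Bool, (∀ i, x i ≤ y i) → φ x ≤ φ y) →
      φ (fun _ => false) = false → φ (fun _ => true) = true →
      ∑ x ∈ Finset.univ.filter (fun x => φ x = true), d x = 0) :
    ∀ a : Fin n → Bool, a ≠ (fun _ => false) → d a = 0 := by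
  classical
  set c : (Fin n → Bool) → ℕ := fun x => (Finset.univ.filter fun i => x i = true).card with hc
  have hcle : ∀ x : Fin n → Bool, c x ≤ n := by
    intro x
    calc c x ≤ Finset.univ.card := Finset.card_filter_le _ _
    _ = n := by simp
  have key : ∀ m : ℕ, ∀ a : Fin n → Bool, a ≠ (fun _ => false) → n - c a < m → d a = 0 := by
    intro m
    induction m with
    | zero => intro a _ hm; omega
    | succ m ih =>
      intro a ha hm
      obtain ⟨i0, hi0⟩ : ∃ i, a i = true := by
        by_contra h
        push_neg at h
        exact ha (funext fun i => by rw [← Bool.not_eq_true]; exact h i)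
      set φ : (Fin n → Bool) → Bool := fun y => decide (∀ i, a i = true → y i = true) with hφ
      have hmono : ∀ x y : Fin n → Bool, (∀ i, x i ≤ y i) → φ x ≤ φ y := by
        intro x y hxy
        by_cases hx : ∀ i, a i = true → x i = true
        · have hy : ∀ i, a i = true → y i = true := by
            intro i hi
            have h1 := hxy i
            rw [hx i hi] at h1
            cases hyy : y i
            · rw [hyy] at h1; exact absurd h1 (by decide)
            · rfl
          simp only [hφ, decide_eq_true_eq]
          rw [decide_eq_true hx, decide_eq_true hy]
        · have : φ x = false := by simp [hφ]; push_neg at hx; simpa using hx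
          rw [this]; exact Bool.false_le _
      have hφ0 : φ (fun _ => false) = false := by
        rw [hφ, decide_eq_false_iff_not]
        intro h
        exact Bool.false_ne_true (h i0 hi0)
      have hφ1 : φ (fun _ => true) = true := by simp [hφ]
      have hsum := H φ hmono hφ0 hφ1
      have hamem : a ∈ Finset.univ.filter (fun x => φ x = true) := by
        simp only [Finset.mem_filter, Finset.mem_univ, true_and, hφ, decide_eq_true_eq]
        intro i hi; exact hi
      rw [← Finset.add_sum_erase _ _ hamem] at hsum
      have hrest : ∑ y ∈ (Finset.univ.filter (fun x => φ x = true)).erase a, d y = 0 := by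
        apply Finset.sum_eq_zero
        intro y hy
        rw [Finset.mem_erase, Finset.mem_filter] at hy
        obtain ⟨hya, ⟨_, hyφ⟩⟩ := hy
        rw [hφ, decide_eq_true_eq] at hyφ
        have hy0 : y ≠ (fun _ => false) := by
          intro h
          have := hyφ i0 hi0
          rw [h] at this
          exact Bool.false_ne_true this
        have hsub : (Finset.univ.filter fun i => a i = true) ⊆
            (Finset.univ.filter fun i => y i = true) := by
          intro i hi
          simp only [Finset.mem_filter, Finset.mem_univ, true_and] at hi ⊢
          exact hyφ i hi
        obtain ⟨i1, hi1⟩ : ∃ i, y i ≠ a i := by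
          by_contra h; push_neg at h; exact hya (funext h)
        have hai1 : a i1 = false := by
          cases hh : a i1
          · rfl
          · exact absurd ((hyφ i1 hh) ▸ hh ▸ rfl : y i1 = a i1) hi1
        have hyi1 : y i1 = true := by
          cases hh : y i1
          · exact absurd (hh.trans hai1.symm) hi1
          · rfl
        have hss : (Finset.univ.filter fun i => a i = true) ⊂
            (Finset.univ.filter fun i => y i = true) := by
          refine ⟨hsub, fun hcon => ?_⟩
          have : i1 ∈ Finset.univ.filter fun i => a i = true := by
            apply hcon
            simp only [Finset.mem_filter, Finset.mem_univ, true_and]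
            exact hyi1
          simp only [Finset.mem_filter, Finset.mem_univ, true_and] at this
          rw [this] at hai1
          simp at hai1
        have hclt : c a < c y := Finset.card_lt_card hss
        exact ih y hy0 (by have := hcle y; omega)
      rw [hrest, add_zero] at hsum
      exact hsum
  intro a ha
  exact key (n + 1) a ha (by omega)

theorem stmt_6 (n : ℕ) (hn : 2 ≤ n)
    {Ω : Type*} [MeasureSpace Ω] [IsProbabilityMeasure (ℙ : Measure Ω)]
    (X : Fin n → Ω → ℝ) (hX : ∀ i, Measurable (X i))
    (w : (Fin n → Bool) → ℝ) (t : ℝ) (ht : 0 < t) :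
    (∀ φ : (Fin n → Bool) → Bool,
        (∀ x y : Fin n → Bool, (∀ i, x i ≤ y i) → φ x ≤ φ y) →
        φ (fun _ => false) = false → φ (fun _ => true) = true →
        (ℙ {ω | φ (fun i => decide (t < X i ω)) = true}).toReal =
          ∑ k ∈ Finset.Icc 1 n,
            ((∑ x ∈ Finset.univ.filter
                (fun x : Fin n → Bool =>
                  (Finset.univ.filter fun i => x i = true).card = n - k + 1),
                w x * (if φ x then (1 : ℝ) else 0)) -
             (∑ x ∈ Finset.univ.filter
                (fun x : Fin n → Bool =>
                  (Finset.univ.filter fun i => x i = true).card = n - k),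
                w x * (if φ x then (1 : ℝ) else 0))) *
            (ℙ {ω | n + 1 - k ≤ (Finset.univ.filter fun i => t < X i ω).card}).toReal) ↔
    (∀ x : Fin n → Bool, x ≠ (fun _ => false) →
        (ℙ {ω | (fun i => decide (t < X i ω)) = x}).toReal =
          w x * ∑ z ∈ Finset.univ.filter
              (fun z : Fin n → Bool =>
                (Finset.univ.filter fun i => z i = true).card =
                  (Finset.univ.filter fun i => x i = true).card),
            (ℙ {ω | (fun i => decide (t < X i ω)) = z}).toReal) := by
  classical
  -- notation
  have h1 : ∀ φ : (Fin n → Bool) → Bool,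
      (ℙ {ω | φ (fun i => decide (t < X i ω)) = true}).toReal =
      ∑ x ∈ Finset.univ.filter (fun x => φ x = true),
        (ℙ {ω | (fun i => decide (t < X i ω)) = x}).toReal :=
    fun φ => lemA_aux n X hX t (fun x => φ x = true)
  have h2 : ∀ k : ℕ,
      (ℙ {ω | n + 1 - k ≤ (Finset.univ.filter fun i => t < X i ω).card}).toReal =
      ∑ x ∈ Finset.univ.filter
          (fun x : Fin n → Bool => n + 1 - k ≤ (Finset.univ.filter fun i => x i = true).card),
        (ℙ {ω | (fun i => decide (t < X i ω)) = x}).toReal := by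
    intro k
    have := lemA_aux n X hX t
      (fun x : Fin n → Bool => n + 1 - k ≤ (Finset.univ.filter fun i => x i = true).card)
    have hset : {ω | n + 1 - k ≤ (Finset.univ.filter fun i => t < X i ω).card} =
        {ω | (fun x : Fin n → Bool =>
          n + 1 - k ≤ (Finset.univ.filter fun i => x i = true).card)
          (fun i => decide (t < X i ω))} := by
      ext ω; simp
    rw [hset, this]
  simp only [h1, h2]
  set p : (Fin n → Bool) → ℝ :=
    fun x => (ℙ {ω | (fun i => decide (t < X i ω)) = x}).toReal with hp
  constructor
  · intro hall
    have H : ∀ φ : (Fin n → Bool) → Bool,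
        (∀ x y : Fin n → Bool, (∀ i, x i ≤ y i) → φ x ≤ φ y) →
        φ (fun _ => false) = false → φ (fun _ => true) = true →
        ∑ x ∈ Finset.univ.filter (fun x => φ x = true),
          (p x - w x * ∑ z ∈ Finset.univ.filter
            (fun z : Fin n → Bool => (Finset.univ.filter fun i => z i = true).card =
              (Finset.univ.filter fun i => x i = true).card), p z) = 0 := by
      intro φ hmono hφ0 hφ1
      have := hall φ hmono hφ0 hφ1
      rw [subB_aux n p w φ hφ0] at this
      rw [Finset.sum_sub_distrib, sub_eq_zero]
      exact this
    intro x hx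
    exact sub_eq_zero.mp (core_aux n _ H x hx)
  · intro hw φ hmono hφ0 hφ1
    rw [subB_aux n p w φ hφ0]
    refine Finset.sum_congr rfl fun z hz => ?_
    simp only [Finset.mem_filter, Finset.mem_univ, true_and] at hz
    have hz0 : z ≠ (fun _ => false) := by
      intro h
      rw [h, hφ0] at hz
      exact Bool.false_ne_true hz
    exact hw z hz0
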